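/- Let Bₙ denote the Bell numbers, defined by Σ_{n≥0} Bₙ xⁿ/n! = e^{e^x − 1}. Then the ordinary generating series Σ_{n≥0} Bₙ xⁿ reduced modulo 2 equals the rational series 1/(1 + x + x²) in F₂[[x]]. -/

import Mathlib

open PowerSeries

/-- The Bell numbers: `B₀ = 1` and `B_{n+1} = Σ_{k=0}^{n} C(n,k)·B_k`.
`Bₙ` counts the partitions of an `n`-element set. -/
def Bell : ℕ → ℕ
  | 0 => 1
  | n + 1 => ∑ k ∈ (Finset.range (n + 1)).attach, (n.choose k) * Bell k
  decreasing_by exact Finset.mem_range.mp k.2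

lemma bell_succ (n : ℕ) :
    Bell (n + 1) = ∑ k ∈ Finset.range (n + 1), n.choose k * Bell k := by
  rw [Bell, ← Finset.sum_attach (Finset.range (n + 1)) (fun k => n.choose k * Bell k)]

lemma bell_inner_sum (n i : ℕ) (hi : i ≤ n) :
    ∑ j ∈ Finset.Ico i (n + 1), n.choose j * j.choose i
      = n.choose i * 2 ^ (n - i) := by
  have h1 : ∀ j ∈ Finset.Ico i (n + 1), n.choose j * j.choose i
      = n.choose i * (n - i).choose (j - i) := by
    intro j hj
    obtain ⟨hji, hjn⟩ := Finset.mem_Ico.mp hj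
    exact Nat.choose_mul hji
  rw [Finset.sum_congr rfl h1, ← Finset.mul_sum]
  congr 1
  rw [Finset.sum_Ico_eq_sum_range]
  have h2 : n + 1 - i = (n - i) + 1 := by omega
  rw [h2]
  simpa using Nat.sum_range_choose (n - i)

lemma bell_key (n : ℕ) :
    ∑ j ∈ Finset.range (n + 1), n.choose j * Bell (j + 1)
      = ∑ i ∈ Finset.range (n + 1), n.choose i * 2 ^ (n - i) * Bell i := by
  calc ∑ j ∈ Finset.range (n + 1), n.choose j * Bell (j + 1)
      = ∑ j ∈ Finset.Ico 0 (n + 1), ∑ i ∈ Finset.Ico 0 (j + 1),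
          n.choose j * (j.choose i * Bell i) := by
        simp only [← Finset.range_eq_Ico]
        simp_rw [bell_succ, Finset.mul_sum]
    _ = ∑ i ∈ Finset.Ico 0 (n + 1), ∑ j ∈ Finset.Ico i (n + 1),
          n.choose j * (j.choose i * Bell i) := by
        rw [← Finset.sum_Ico_Ico_comm]
    _ = ∑ i ∈ Finset.range (n + 1), n.choose i * 2 ^ (n - i) * Bell i := by
        rw [← Finset.range_eq_Ico]
        refine Finset.sum_congr rfl fun i hi => ?_
        simp_rw [← mul_assoc, ← Finset.sum_mul]
        rw [bell_inner_sum n i (Nat.lt_succ_iff.mp (Finset.mem_range.mp hi))]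

lemma bell_rec (n : ℕ) :
    Bell (n + 2) = (∑ j ∈ Finset.range (n + 1), n.choose j * Bell (j + 1))
      + Bell (n + 1) := by
  rw [bell_succ (n + 1), Finset.sum_range_succ' _ (n + 1)]
  have e1 : ∀ k, (n + 1).choose (k + 1) = n.choose k + n.choose (k + 1) :=
    fun k => Nat.choose_succ_succ n k
  simp_rw [e1, Nat.add_mul, Finset.sum_add_distrib, Nat.choose_zero_right, one_mul]
  have h2 : (∑ k ∈ Finset.range (n + 1), n.choose (k + 1) * Bell (k + 1)) + Bell 0
      = Bell (n + 1) := by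
    rw [Finset.sum_range_succ, Nat.choose_succ_self, bell_succ n,
      Finset.sum_range_succ' (fun k => n.choose k * Bell k) n]
    simp
  omega

lemma bell_mod_two (n : ℕ) :
    ((Bell (n + 2) : ZMod 2)) = (Bell (n + 1) : ZMod 2) + (Bell n : ZMod 2) := by
  have h := bell_rec n
  rw [bell_key n] at h
  have h' : ((Bell (n + 2) : ZMod 2))
      = (∑ i ∈ Finset.range (n + 1), (n.choose i : ZMod 2) * 2 ^ (n - i) * Bell i)
        + Bell (n + 1) := by
    rw [h]; push_cast; ring
  rw [h', Finset.sum_range_succ]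
  have hz : ∀ i ∈ Finset.range n,
      (n.choose i : ZMod 2) * 2 ^ (n - i) * (Bell i : ZMod 2) = 0 := by
    intro i hi
    have hne : n - i ≠ 0 := by have := Finset.mem_range.mp hi; omega
    obtain ⟨m, hm⟩ := Nat.exists_eq_succ_of_ne_zero hne
    rw [hm, pow_succ]
    have h2 : (2 : ZMod 2) = 0 := rfl
    rw [h2]; ring
  rw [Finset.sum_congr rfl hz]
  simp [add_comm]

/-- The ordinary generating series of the Bell numbers reduced modulo `2` equals the
rational series `1/(1 + x + x²)` in `F₂[[x]]`. -/
theorem bell_mod_two_rational :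
    (PowerSeries.mk fun n => ((Bell n : ZMod 2))) *
      (1 + PowerSeries.X + PowerSeries.X ^ 2) = 1 := by
  have hb1 : Bell 1 = 1 := by rw [bell_succ]; simp [Bell]
  ext n
  rw [mul_add, mul_add, mul_one, map_add, map_add, pow_two, ← mul_assoc]
  match n with
  | 0 =>
    simp [PowerSeries.coeff_zero_eq_constantCoeff, Bell]
  | 1 =>
    rw [PowerSeries.coeff_succ_mul_X, PowerSeries.coeff_one]
    simp [hb1, Bell]
    decide
  | (n + 2) =>
    rw [PowerSeries.coeff_succ_mul_X, PowerSeries.coeff_succ_mul_X,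
      PowerSeries.coeff_succ_mul_X]
    simp only [PowerSeries.coeff_mk, PowerSeries.coeff_one, Nat.succ_ne_zero, if_false]
    rw [bell_mod_two n]
    ring_nf
    rw [(by decide : (2 : ZMod 2) = 0), mul_zero, mul_zero, add_zero]
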